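/- arXiv:1504.05662 — 11 statements merged into one kernel-verified Lean document; each statement's English description precedes it below -/
import Mathlib

section
/- If an ℓ×k matrix A over a finite field F_q generates a linear code of length k, dimension ℓ, and minimum distance at least 2, then for every nonempty subset J of the row indices [ℓ], the union of the supports of the rows of A indexed by J has cardinality at least |J| + 1. -/
open Finset Matrix

/-- If an ℓ×k matrix A generates an [k,ℓ,≥2] code, then for every nonempty
set J of rows, the union of the supports of those rows has cardinality ≥ |J| + 1. -/
theorem stmt1 {ℓ k : ℕ} {F : Type} [Field F] [Fintype F] [DecidableEq F]
    (A : Matrix (Fin ℓ) (Fin k) F)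
    (hind : LinearIndependent F (fun i : Fin ℓ => A i))
    (hdist : ∀ x : Fin ℓ → F, x ≠ 0 →
        2 ≤ (Finset.univ.filter (fun j => Matrix.vecMul x A j ≠ 0)).card) :
    ∀ J : Finset (Fin ℓ), J.Nonempty →
      J.card + 1 ≤ (J.biUnion (fun i => Finset.univ.filter (fun j => A i j ≠ 0))).card := by
  classical
  intro J hJ
  by_contra hlt
  push_neg at hlt
  set S := J.biUnion (fun i => Finset.univ.filter (fun j => A i j ≠ 0)) with hS
  have hcard : S.card ≤ J.card := Nat.lt_succ_iff.mp hlt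
  -- extension by zero of a vector indexed by J
  let ext : ({i // i ∈ J} → F) → (Fin ℓ → F) := fun x i => if h : i ∈ J then x ⟨i, h⟩ else 0
  -- key computation
  have key : ∀ (x : {i // i ∈ J} → F) (j : Fin k),
      vecMul (ext x) A j = ∑ i : {i // i ∈ J}, x i * A i j := by
    intro x j
    have h1 : vecMul (ext x) A j = ∑ i ∈ J, ext x i * A i j := by
      simp only [vecMul, dotProduct]
      symm
      apply Finset.sum_subset (Finset.subset_univ J)
      intro i _ hi
      simp [ext, hi]
    rw [h1, ← Finset.sum_coe_sort J (fun i => ext x i * A i j)]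
    apply Finset.sum_congr rfl
    intro i _
    simp [ext, i.2]
  -- outside S the combination vanishes
  have hoff : ∀ (x : {i // i ∈ J} → F) (j : Fin k), j ∉ S → vecMul (ext x) A j = 0 := by
    intro x j hj
    rw [key]
    apply Finset.sum_eq_zero
    intro i _
    have hz : A ↑i j = 0 := by
      by_contra h
      exact hj (Finset.mem_biUnion.mpr ⟨↑i, i.2, by simp [h]⟩)
    simp [hz]
  -- the restricted matrix and its linear map
  let M : Matrix {i // i ∈ J} {j // j ∈ S} F := fun i s => A ↑i ↑s
  have hTS : ∀ (x : {i // i ∈ J} → F) (s : {j // j ∈ S}),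
      Matrix.vecMulLinear M x s = vecMul (ext x) A ↑s := by
    intro x s
    rw [key]
    rw [Matrix.vecMulLinear_apply]
    simp [vecMul, dotProduct, M]
  have hinj : Function.Injective (Matrix.vecMulLinear M) := by
    rw [injective_iff_map_eq_zero]
    intro x hx
    have hz : vecMul (ext x) A = 0 := by
      funext j
      by_cases hj : j ∈ S
      · have := congrFun hx ⟨j, hj⟩
        rw [hTS] at this
        exact this
      · exact hoff x j hj
    have hx0 : ext x = 0 := by
      have hcomb : ∑ i : Fin ℓ, ext x i • A i = 0 := by
        funext j
        have := congrFun hz j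
        simpa [vecMul, dotProduct, Finset.sum_apply] using this
      have := Fintype.linearIndependent_iff.mp hind (ext x) hcomb
      funext i
      exact this i
    funext i
    have := congrFun hx0 ↑i
    simpa [ext, i.2] using this
  have h1 : J.card ≤ S.card := by
    have := LinearMap.finrank_le_finrank_of_injective hinj
    simpa [Module.finrank_pi, Fintype.card_coe] using this
  have heq : S.card = J.card := le_antisymm hcard h1
  have hbij : Function.Bijective (Matrix.vecMulLinear M) :=
    (Fintype.bijective_iff_injective_and_card _).mpr
      ⟨hinj, by simp [Fintype.card_fun, Fintype.card_coe, heq]⟩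
  obtain ⟨s0, hs0⟩ := Finset.card_pos.mp
    (lt_of_lt_of_le (Finset.card_pos.mpr hJ) h1)
  obtain ⟨x, hx⟩ := hbij.2 (Pi.single (⟨s0, hs0⟩ : {j // j ∈ S}) 1)
  have hxne : ext x ≠ 0 := by
    intro h
    have hx0 : x = 0 := by
      funext i
      have := congrFun h ↑i
      simpa [ext, i.2] using this
    rw [hx0, map_zero] at hx
    have := congrFun hx ⟨s0, hs0⟩
    simp at this
  have hsub : Finset.univ.filter (fun j => vecMul (ext x) A j ≠ 0) ⊆ {s0} := by
    intro j hj
    simp only [Finset.mem_filter] at hj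
    have hjS : j ∈ S := by
      by_contra h
      exact hj.2 (hoff x j h)
    have hval := congrFun hx ⟨j, hjS⟩
    rw [hTS] at hval
    rw [Finset.mem_singleton]
    by_contra hne
    have hne' : (⟨j, hjS⟩ : {j // j ∈ S}) ≠ ⟨s0, hs0⟩ := by
      simp [Subtype.ext_iff, hne]
    rw [Pi.single_eq_of_ne hne'] at hval
    exact hj.2 hval
  have hle1 : (Finset.univ.filter (fun j => vecMul (ext x) A j ≠ 0)).card ≤ 1 := by
    simpa using Finset.card_le_card hsub
  have := hdist (ext x) hxne
  omega
end

section
/- If an ℓ×k matrix A over a finite field F_q generates a linear code of length k, dimension ℓ, and minimum distance at least d', then for every nonempty subset J of the row indices [ℓ], the union of the supports of the rows of A indexed by J has cardinality at least |J| + d' − 1. -/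
open Finset Matrix

/-- If an ℓ×k matrix A generates a code of minimum distance ≥ d', then for
every nonempty set J of rows, the union of supports has cardinality ≥ |J| + d' − 1. -/
theorem stmt2 {ℓ k d' : ℕ} {F : Type} [Field F] [Fintype F] [DecidableEq F]
    (hd' : 1 ≤ d')
    (A : Matrix (Fin ℓ) (Fin k) F)
    (hind : LinearIndependent F (fun i : Fin ℓ => A i))
    (hdist : ∀ x : Fin ℓ → F, x ≠ 0 →
        d' ≤ (Finset.univ.filter (fun j => Matrix.vecMul x A j ≠ 0)).card) :
    ∀ J : Finset (Fin ℓ), J.Nonempty →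
      J.card + d' - 1 ≤ (J.biUnion (fun i => Finset.univ.filter (fun j => A i j ≠ 0))).card := by
  intro J hJ
  set S := J.biUnion (fun i => Finset.univ.filter (fun j => A i j ≠ 0)) with hS
  have hsupp : ∀ x : Fin ℓ → F, (∀ i, i ∉ J → x i = 0) →
      ∀ j, j ∉ S → vecMul x A j = 0 := by
    intro x hx j hj
    have hterm : ∀ i, x i * A i j = 0 := by
      intro i
      by_cases hi : i ∈ J
      · have hA : A i j = 0 := by
          by_contra h
          exact hj (Finset.mem_biUnion.mpr ⟨i, hi,
            Finset.mem_filter.mpr ⟨Finset.mem_univ _, h⟩⟩)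
        simp [hA]
      · simp [hx i hi]
    simp [vecMul, dotProduct, hterm]
  obtain ⟨i0, hi0⟩ := hJ
  have hSd : d' ≤ S.card := by
    have hx0 : (Pi.single i0 (1:F) : Fin ℓ → F) ≠ 0 := by
      intro h
      have := congrFun h i0
      simp at this
    refine le_trans (hdist _ hx0) (Finset.card_le_card ?_)
    intro j hj
    simp only [Finset.mem_filter] at hj
    by_contra hjS
    exact hj.2 (hsupp _ (fun i hi => Pi.single_eq_of_ne (by rintro rfl; exact hi hi0) 1) j hjS)
  obtain ⟨T, hTS, hT⟩ := Finset.exists_subset_card_eq (s := S) (n := d' - 1) (by omega)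
  classical
  let ext : ({i // i ∈ J} → F) → (Fin ℓ → F) :=
    fun x i => if h : i ∈ J then x ⟨i, h⟩ else 0
  let L : ({i // i ∈ J} → F) → ({j // j ∈ S \ T} → F) :=
    fun x j => vecMul (ext x) A j
  have hinj : Function.Injective L := by
    intro x y hxy
    by_contra hne
    have hz : ext x - ext y ≠ 0 := by
      intro h
      apply hne
      funext a
      have h2 := congrFun h a.val
      simp only [Pi.sub_apply, Pi.zero_apply, sub_eq_zero, ext, dif_pos a.2] at h2
      simpa using h2
    have hsub : ∀ i, i ∉ J → (ext x - ext y) i = 0 := by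
      intro i hi
      simp [ext, dif_neg hi]
    have hsubset : (Finset.univ.filter (fun j => vecMul (ext x - ext y) A j ≠ 0)) ⊆ T := by
      intro j hj
      simp only [Finset.mem_filter] at hj
      by_contra hjT
      apply hj.2
      by_cases hjS : j ∈ S
      · have hjm : j ∈ (S \ T : Finset (Fin k)) := Finset.mem_sdiff.mpr ⟨hjS, hjT⟩
        have := congrFun hxy (⟨j, hjm⟩ : {j // j ∈ S \ T})
        simp only [L] at this
        rw [Matrix.sub_vecMul]
        simpa [sub_eq_zero] using this
      · exact hsupp _ hsub j hjS
    have hle := Finset.card_le_card hsubset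
    have := hdist _ hz
    omega
  have hcard := Fintype.card_le_of_injective L hinj
  rw [Fintype.card_fun, Fintype.card_fun, Fintype.card_coe, Fintype.card_coe] at hcard
  have hq : 1 < Fintype.card F := Fintype.one_lt_card
  have hJle : J.card ≤ (S \ T).card := (Nat.pow_le_pow_iff_right hq).mp hcard
  have hsd : (S \ T).card = S.card - (d' - 1) := by
    rw [Finset.card_sdiff_of_subset hTS, hT]
  omega
end

section
/- Let M be a k×n binary (0-1) matrix with n ≥ k. The column condition '|∪_{j∈J} supp(M[j])| ≥ |J| + 1 for every nonempty subset J of columns with |J| ≤ k−1' holds if and only if the row condition '|∪_{i∈I} supp(M_i)| ≥ n − k + |I| + 1 for every nonempty proper subset I of [k]' holds. -/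
open Finset Matrix

/-- Equivalence of the column form and row form of the Weak Security
Condition for a k×n binary matrix M with n ≥ k. -/
theorem stmt3 {k n : ℕ} (hkn : k ≤ n) (M : Matrix (Fin k) (Fin n) Bool) :
    (∀ J : Finset (Fin n), J.Nonempty → J.card ≤ k - 1 →
        J.card + 1 ≤ (J.biUnion (fun j => Finset.univ.filter (fun i => M i j = true))).card) ↔
    (∀ I : Finset (Fin k), I.Nonempty → I ≠ Finset.univ →
        n - k + I.card + 1 ≤
          (I.biUnion (fun i => Finset.univ.filter (fun j => M i j = true))).card) := by
  constructor
  · -- column condition → row condition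
    intro hC I hI hIne
    set R := I.biUnion (fun i => Finset.univ.filter (fun j => M i j = true)) with hRdef
    set J := Rᶜ with hJdef
    have hN : ∀ i ∈ J.biUnion (fun j => Finset.univ.filter (fun i => M i j = true)), i ∉ I := by
      intro i hi hiI
      simp only [mem_biUnion, mem_filter, mem_univ, true_and] at hi
      obtain ⟨j, hjJ, hM⟩ := hi
      have hjR : j ∈ R := by
        simp only [hRdef, mem_biUnion, mem_filter, mem_univ, true_and]
        exact ⟨i, hiI, hM⟩
      exact (Finset.mem_compl.mp hjJ) hjR
    have hIlt : I.card < k := by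
      have h := Finset.card_lt_card (lt_of_le_of_ne (Finset.subset_univ I) hIne)
      simpa using h
    have hI1 : 1 ≤ I.card := hI.card_pos
    have hRle : R.card ≤ n := by
      have := Finset.card_le_univ R; simpa using this
    have hcompl : J.card + R.card = n := by
      have h := Finset.card_compl R
      simp only [hJdef, Fintype.card_fin] at h ⊢
      omega
    have key : J.card + I.card + 1 ≤ k := by
      by_contra h
      push_neg at h
      have hm : k - I.card ≤ J.card := by omega
      obtain ⟨J', hJ'sub, hJ'card⟩ := Finset.exists_subset_card_eq hm
      have hJ'ne : J'.Nonempty := by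
        rw [← Finset.card_pos, hJ'card]; omega
      have hJ'le : J'.card ≤ k - 1 := by rw [hJ'card]; omega
      have hCJ' := hC J' hJ'ne hJ'le
      have hsub : J'.biUnion (fun j => Finset.univ.filter (fun i => M i j = true)) ⊆ Iᶜ := by
        intro i hi
        rw [Finset.mem_compl]
        exact hN i (Finset.biUnion_subset_biUnion_of_subset_left _ hJ'sub hi)
      have hle : (J'.biUnion (fun j => Finset.univ.filter (fun i => M i j = true))).card ≤ k - I.card := by
        have h1 := Finset.card_le_card hsub
        have h2 := Finset.card_compl I
        simp only [Fintype.card_fin] at h2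
        omega
      omega
    omega
  · -- row condition → column condition
    intro hRow J hJ hJcard
    set N := J.biUnion (fun j => Finset.univ.filter (fun i => M i j = true)) with hNdef
    have hJ1 : 1 ≤ J.card := hJ.card_pos
    have hk2 : 1 ≤ k := by omega
    have hJn : J.card ≤ n := by
      have := Finset.card_le_univ J; simpa using this
    -- N is nonempty
    have hNne : N.Nonempty := by
      by_contra hne
      rw [Finset.not_nonempty_iff_eq_empty] at hne
      obtain ⟨j0, hj0⟩ := hJ
      have hzero : ∀ i, ¬ M i j0 = true := by
        intro i hb
        have hiN : i ∈ N := by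
          simp only [hNdef, mem_biUnion, mem_filter, mem_univ, true_and]
          exact ⟨j0, hj0, hb⟩
        rw [hne] at hiN
        exact absurd hiN (Finset.notMem_empty i)
      have hk2' : 2 ≤ k := by omega
      have i0 : Fin k := ⟨0, by omega⟩
      have h1 : ({i0}ᶜ : Finset (Fin k)).Nonempty := by
        rw [← Finset.card_pos, Finset.card_compl]
        simp [Fintype.card_fin]
        omega
      have h2 : ({i0}ᶜ : Finset (Fin k)) ≠ Finset.univ := by
        intro h
        have : i0 ∈ ({i0}ᶜ : Finset (Fin k)) := h ▸ Finset.mem_univ i0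
        simp at this
      have hr := hRow _ h1 h2
      rw [Finset.card_compl, Finset.card_singleton, Fintype.card_fin] at hr
      have hmiss : j0 ∉ ({i0}ᶜ : Finset (Fin k)).biUnion
          (fun i => Finset.univ.filter (fun j => M i j = true)) := by
        simp only [mem_biUnion, mem_filter, mem_univ, true_and, not_exists]
        intro i
        simp [hzero i]
      have hsub : ({i0}ᶜ : Finset (Fin k)).biUnion
          (fun i => Finset.univ.filter (fun j => M i j = true)) ⊆ {j0}ᶜ := by
        intro j hjmem
        rw [Finset.mem_compl, Finset.mem_singleton]
        intro h
        exact hmiss (h ▸ hjmem)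
      have hle := Finset.card_le_card hsub
      rw [Finset.card_compl, Finset.card_singleton, Fintype.card_fin] at hle
      omega
    by_cases hNuniv : N = Finset.univ
    · have : N.card = k := by rw [hNuniv]; simp
      omega
    · set I := Nᶜ with hIdef
      have hIne : I.Nonempty := by
        rw [← Finset.card_pos, hIdef, Finset.card_compl, Fintype.card_fin]
        have hNcard : N.card < k := by
          have h := Finset.card_lt_card (lt_of_le_of_ne (Finset.subset_univ N) hNuniv)
          simpa using h
        omega
      have hInu : I ≠ Finset.univ := by
        obtain ⟨i, hiN⟩ := hNne
        intro h
        have : i ∈ I := h ▸ Finset.mem_univ i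
        rw [hIdef, Finset.mem_compl] at this
        exact this hiN
      have hr := hRow I hIne hInu
      have hsub : I.biUnion (fun i => Finset.univ.filter (fun j => M i j = true)) ⊆ Jᶜ := by
        intro j hjmem
        simp only [mem_biUnion, mem_filter, mem_univ, true_and] at hjmem
        obtain ⟨i, hiI, hM⟩ := hjmem
        rw [Finset.mem_compl]
        intro hjJ
        have : i ∈ N := by
          simp only [hNdef, mem_biUnion, mem_filter, mem_univ, true_and]
          exact ⟨j, hjJ, hM⟩
        rw [hIdef, Finset.mem_compl] at hiI
        exact hiI this
      have hle := Finset.card_le_card hsub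
      rw [Finset.card_compl, Fintype.card_fin] at hle
      have hIcard : I.card + N.card = k := by
        rw [hIdef, Finset.card_compl, Fintype.card_fin]
        have := Finset.card_le_univ N
        simp only [Fintype.card_fin] at this
        omega
      have hNle : N.card ≤ k := by omega
      omega
end

section
/- Let P be a (k−1)×k binary matrix and let var(P) be the matrix of independent indeterminates obtained by replacing each 1-entry of P with a distinct variable ξ_{i,j} and keeping 0-entries as 0. Let f(var(P)) be the product of the determinants of all k maximal ((k−1)×(k−1)) square submatrices of var(P). Then f(var(P)) is not the identically zero polynomial if and only if for every nonempty subset J ⊆ [k−1] of rows, |∪_{j∈J} supp(P_j)| ≥ |J| + 1. -/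
open Finset Matrix

/-- The determinant of the generic matrix with column `j₀` deleted is nonzero iff there is an
injective choice of columns (≠ j₀) hitting the support of each row. -/
lemma key_det {m : ℕ} {F : Type} [Field F]
    (P : Matrix (Fin m) (Fin (m + 1)) Bool) (j₀ : Fin (m + 1)) :
    Matrix.det
      (Matrix.submatrix
        (Matrix.of fun i j =>
          if P i j then (MvPolynomial.X (i, j) : MvPolynomial (Fin m × Fin (m + 1)) F)
          else 0)
        id j₀.succAbove) ≠ 0 ↔
    ∃ f : Fin m → Fin (m + 1), Function.Injective f ∧
      ∀ i, f i ∈ (Finset.univ.filter (fun j => P i j = true)).erase j₀ := by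
  classical
  constructor
  · intro hdet
    rw [Matrix.det_apply] at hdet
    obtain ⟨σ, -, hσ⟩ := Finset.exists_ne_zero_of_sum_ne_zero hdet
    have hprod : ∀ i : Fin m,
        (Matrix.of fun i j =>
          if P i j then (MvPolynomial.X (i, j) : MvPolynomial (Fin m × Fin (m + 1)) F)
          else 0) (σ i) (j₀.succAbove i) ≠ 0 := by
      intro i hi
      apply hσ
      rw [Finset.prod_eq_zero (Finset.mem_univ i)]
      · simp
      · simpa using hi
    have hP : ∀ i : Fin m, P (σ i) (j₀.succAbove i) = true := by
      intro i
      have := hprod i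
      by_contra h
      simp only [Matrix.of_apply, Matrix.submatrix_apply] at this
      rw [if_neg h] at this
      exact this rfl
    refine ⟨fun i => j₀.succAbove (σ.symm i), ?_, ?_⟩
    · exact (Fin.succAbove_right_injective).comp σ.symm.injective
    · intro i
      rw [Finset.mem_erase]
      refine ⟨Fin.succAbove_ne j₀ _, ?_⟩
      simp only [Finset.mem_filter, Finset.mem_univ, true_and]
      have := hP (σ.symm i)
      simpa using this
  · rintro ⟨f, hfinj, hf⟩
    have hfne : ∀ i, f i ≠ j₀ := fun i => (Finset.mem_erase.mp (hf i)).1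
    have hfP : ∀ i, P i (f i) = true := by
      intro i
      have := (Finset.mem_erase.mp (hf i)).2
      simpa using this
    choose g hg using fun i => Fin.exists_succAbove_eq (hfne i)
    have hginj : Function.Injective g := by
      intro a b hab
      apply hfinj
      rw [← hg a, ← hg b, hab]
    have hgbij : Function.Bijective g := (Finite.injective_iff_bijective).mp hginj
    let σ : Equiv.Perm (Fin m) := Equiv.ofBijective g hgbij
    intro h0
    -- evaluate at the indicator of the matching
    set x : Fin m × Fin (m + 1) → F := fun p => if p.2 = f p.1 then 1 else 0 with hx
    have heval := congrArg (MvPolynomial.eval x) h0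
    rw [map_zero, RingHom.map_det] at heval
    have hmat : ((Matrix.submatrix
        (Matrix.of fun i j =>
          if P i j then (MvPolynomial.X (i, j) : MvPolynomial (Fin m × Fin (m + 1)) F)
          else 0)
        id j₀.succAbove) |> (MvPolynomial.eval x).mapMatrix) = σ.toPEquiv.toMatrix := by
      ext i j
      simp only [RingHom.mapMatrix_apply, Matrix.map_apply, Matrix.submatrix_apply,
        Matrix.of_apply, id_eq, PEquiv.toMatrix_apply, Equiv.toPEquiv_apply,
        Option.mem_def, Option.some.injEq]
      by_cases hij : σ i = j
      · rw [if_pos hij]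
        have hgi : g i = j := hij
        have h1 : j₀.succAbove j = f i := by rw [← hgi, hg i]
        rw [h1, if_pos (hfP i), MvPolynomial.eval_X]
        simp [hx]
      · rw [if_neg hij]
        have h1 : j₀.succAbove j ≠ f i := by
          rw [← hg i]
          intro h
          exact hij (Fin.succAbove_right_injective h).symm
        by_cases hp : P i (j₀.succAbove j) = true
        · rw [if_pos hp, MvPolynomial.eval_X]
          simp [hx, h1]
        · rw [if_neg hp, map_zero]
    rw [hmat, Matrix.det_permutation] at heval
    rcases Int.units_eq_one_or (Equiv.Perm.sign σ) with h | h <;> rw [h] at heval <;>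
      simp at heval

/-- The combinatorial equivalence: Hall with one column deleted for every column, vs
the "+1" Hall condition. -/
lemma comb {m : ℕ} (T : Fin m → Finset (Fin (m + 1))) :
    (∀ j₀ : Fin (m + 1), ∀ s : Finset (Fin m),
        s.card ≤ (s.biUnion fun i => (T i).erase j₀).card) ↔
    ∀ J : Finset (Fin m), J.Nonempty → J.card + 1 ≤ (J.biUnion T).card := by
  classical
  have hbu : ∀ (j₀ : Fin (m + 1)) (s : Finset (Fin m)),
      (s.biUnion fun i => (T i).erase j₀) = (s.biUnion T).erase j₀ := by
    intro j₀ s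
    ext j
    simp only [Finset.mem_biUnion, Finset.mem_erase]
    tauto
  constructor
  · intro h J hJ
    by_contra hcon
    push_neg at hcon
    have hle : (J.biUnion T).card ≤ J.card := by omega
    rcases (J.biUnion T).eq_empty_or_nonempty with he | hne
    · have := h ⟨0, Nat.succ_pos m⟩ J
      rw [hbu, he] at this
      simp at this
      obtain ⟨a, ha⟩ := hJ
      exact absurd (this ▸ ha) (by simp [this])
    · obtain ⟨j₀, hj₀⟩ := hne
      have := h j₀ J
      rw [hbu, Finset.card_erase_of_mem hj₀] at this
      obtain ⟨a, ha⟩ := hJ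
      have hJpos : 0 < J.card := Finset.card_pos.mpr ⟨a, ha⟩
      omega
  · intro h j₀ s
    rcases s.eq_empty_or_nonempty with he | hne
    · simp [he]
    · have h1 := h s hne
      rw [hbu]
      have h2 : (s.biUnion T).card - 1 ≤ ((s.biUnion T).erase j₀).card :=
        Finset.pred_card_le_card_erase
      omega

/-- For a (k−1)×k binary matrix P (here with k−1 = m rows and k = m+1
columns), the product of the determinants of all m×m maximal square submatrices of the
matrix of indeterminates var(P) is not identically zero iff every nonempty set J of rows
satisfies |∪_{j∈J} supp(P_j)| ≥ |J| + 1. -/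
theorem stmt9 {m : ℕ} {F : Type} [Field F] [Fintype F]
    (P : Matrix (Fin m) (Fin (m + 1)) Bool) :
    (∏ j₀ : Fin (m + 1),
        Matrix.det
          (Matrix.submatrix
            (Matrix.of fun i j =>
              if P i j then (MvPolynomial.X (i, j) : MvPolynomial (Fin m × Fin (m + 1)) F)
              else 0)
            id j₀.succAbove)) ≠ 0 ↔
    (∀ J : Finset (Fin m), J.Nonempty →
        J.card + 1 ≤ (J.biUnion (fun i => Finset.univ.filter (fun j => P i j = true))).card) := by
  classical
  rw [Finset.prod_ne_zero_iff]
  rw [← comb (fun i => Finset.univ.filter (fun j => P i j = true))]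
  constructor
  · intro h j₀
    have hd := h j₀ (Finset.mem_univ j₀)
    rw [key_det] at hd
    exact (Finset.all_card_le_biUnion_card_iff_existsInjective'
      (fun i => (Finset.univ.filter (fun j => P i j = true)).erase j₀)).mpr hd
  · intro h j₀ _
    rw [key_det]
    exact (Finset.all_card_le_biUnion_card_iff_existsInjective'
      (fun i => (Finset.univ.filter (fun j => P i j = true)).erase j₀)).mp (h j₀)
end

section
/- Let M be a k×n binary matrix with n ≥ k, and let var(M) be the polynomial matrix obtained by replacing each 1-entry with a distinct indeterminate. The product of the determinants of all k×k submatrices of var(M) is not identically zero if and only if |∪_{i∈I} supp(M_i)| ≥ n − k + |I| for every nonempty subset I ⊆ [k] of rows. -/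
open Finset Matrix


section aux
variable {k n : ℕ} {F : Type} [Field F]

lemma aux_det_ne_zero_iff (M : Matrix (Fin k) (Fin n) Bool) (S : Finset (Fin n))
    (hS : S.card = k) :
    Matrix.det
      (Matrix.submatrix
        (Matrix.of fun i j =>
          if M i j then (MvPolynomial.X (i, j) : MvPolynomial (Fin k × Fin n) F) else 0)
        id (fun i : Fin k => ((S.orderIsoOfFin hS i : {x // x ∈ S}) : Fin n))) ≠ 0 ↔
    ∃ σ : Equiv.Perm (Fin k), ∀ i, M i ((S.orderIsoOfFin hS (σ i) : {x // x ∈ S}) : Fin n) = true := by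
  set c : Fin k → Fin n := fun i => ((S.orderIsoOfFin hS i : {x // x ∈ S}) : Fin n) with hc
  have hcinj : Function.Injective c := by
    intro a b hab
    exact (S.orderIsoOfFin hS).injective (Subtype.ext hab)
  constructor
  · intro hdet
    by_contra h
    push_neg at h
    apply hdet
    rw [Matrix.det_apply]
    apply Finset.sum_eq_zero
    intro σ _
    obtain ⟨i0, hi0⟩ := h σ⁻¹
    have : ∏ i, (Matrix.submatrix
        (Matrix.of fun i j =>
          if M i j then (MvPolynomial.X (i, j) : MvPolynomial (Fin k × Fin n) F) else 0)
        id c) (σ i) i = 0 := by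
      apply Finset.prod_eq_zero (Finset.mem_univ (σ⁻¹ i0))
      simp only [Matrix.submatrix_apply, Matrix.of_apply, id_eq, Equiv.Perm.inv_def, Equiv.apply_symm_apply]
      rw [if_neg]
      simpa [hc] using hi0
    rw [this, smul_zero]
  · rintro ⟨σ, hσ⟩
    intro hdet
    have := congrArg (MvPolynomial.eval (fun p : Fin k × Fin n => if p.2 = c (σ p.1) then (1:F) else 0)) hdet
    rw [RingHom.map_det, map_zero, RingHom.mapMatrix_apply] at this
    have hmap : (Matrix.submatrix
        (Matrix.of fun i j =>
          if M i j then (MvPolynomial.X (i, j) : MvPolynomial (Fin k × Fin n) F) else 0)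
        id c).map (MvPolynomial.eval (fun p : Fin k × Fin n => if p.2 = c (σ p.1) then (1:F) else 0))
        = σ.permMatrix F := by
      ext i j
      simp only [Matrix.map_apply, Matrix.submatrix_apply, Matrix.of_apply, id_eq,
        apply_ite, map_zero, MvPolynomial.eval_X]
      by_cases hij : σ i = j
      · subst hij
        rw [if_pos (hσ i), if_pos rfl]
        simp [Equiv.Perm.permMatrix, PEquiv.toMatrix_apply, Equiv.toPEquiv_apply]
      · have : c j ≠ c (σ i) := fun h => hij (hcinj h).symm
        rw [if_neg this]
        have : (σ.permMatrix F) i j = 0 := by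
          simp [Equiv.Perm.permMatrix, PEquiv.toMatrix_apply, Equiv.toPEquiv_apply, hij]
        rw [this, ite_self]
    rw [hmap, Matrix.det_permutation] at this
    rcases Int.units_eq_one_or (Equiv.Perm.sign σ) with h1 | h1 <;> rw [h1] at this <;> simp at this

end aux

section aux2
variable {k n : ℕ}

lemma aux_perm_iff (M : Matrix (Fin k) (Fin n) Bool) (S : Finset (Fin n)) (hS : S.card = k) :
    (∃ σ : Equiv.Perm (Fin k), ∀ i, M i ((S.orderIsoOfFin hS (σ i) : {x // x ∈ S}) : Fin n) = true) ↔
    ∃ f : Fin k → Fin n, Function.Injective f ∧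
      ∀ i, f i ∈ (Finset.univ.filter (fun j => M i j = true)) ∩ S := by
  set e := S.orderIsoOfFin hS with he
  constructor
  · rintro ⟨σ, hσ⟩
    refine ⟨fun i => ((e (σ i) : {x // x ∈ S}) : Fin n), ?_, ?_⟩
    · intro a b hab
      exact σ.injective (e.injective (Subtype.ext hab))
    · intro i
      simp only [Finset.mem_inter, Finset.mem_filter, Finset.mem_univ, true_and]
      exact ⟨hσ i, (e (σ i)).2⟩
  · rintro ⟨f, hfinj, hf⟩
    have hfS : ∀ i, f i ∈ S := fun i => (Finset.mem_inter.mp (hf i)).2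
    have hfM : ∀ i, M i (f i) = true := fun i => by
      have := (Finset.mem_inter.mp (hf i)).1
      simpa using this
    set g : Fin k → Fin k := fun i => e.symm ⟨f i, hfS i⟩ with hg
    have hginj : Function.Injective g := by
      intro a b hab
      apply hfinj
      have := e.symm.injective.eq_iff.mp hab
      exact congrArg Subtype.val this
    refine ⟨Equiv.ofBijective g (Finite.injective_iff_bijective.mp hginj), fun i => ?_⟩
    have : e (g i) = ⟨f i, hfS i⟩ := e.apply_symm_apply _
    simp only [Equiv.ofBijective_apply, this]
    exact hfM i

lemma aux_comb (hkn : k ≤ n) (t : Fin k → Finset (Fin n)) :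
    (∀ S : Finset (Fin n), S.card = k →
      ∀ I : Finset (Fin k), I.card ≤ (I.biUnion (fun i => t i ∩ S)).card) ↔
    (∀ I : Finset (Fin k), I.Nonempty → n - k + I.card ≤ (I.biUnion t).card) := by
  have hbu : ∀ (I : Finset (Fin k)) (S : Finset (Fin n)),
      I.biUnion (fun i => t i ∩ S) = (I.biUnion t) ∩ S := by
    intro I S
    ext j
    simp only [Finset.mem_biUnion, Finset.mem_inter]
    tauto
  constructor
  · intro h I hI
    set N := I.biUnion t with hN
    by_cases hc : k ≤ Nᶜ.card
    · obtain ⟨S, hSsub, hSk⟩ := Finset.exists_subset_card_eq hc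
      have := h S hSk I
      rw [hbu] at this
      have hdisj : N ∩ S = ∅ := by
        rw [← Finset.disjoint_iff_inter_eq_empty]
        exact Finset.disjoint_left.mpr fun a haN haS => (Finset.mem_compl.mp (hSsub haS)) haN
      rw [hdisj] at this
      simp only [Finset.card_empty, Nat.le_zero, Finset.card_eq_zero] at this
      exact absurd this (Finset.nonempty_iff_ne_empty.mp hI)
    · push_neg at hc
      obtain ⟨S, hSsub, _, hSk⟩ := Finset.exists_subsuperset_card_eq (Finset.subset_univ Nᶜ)
        hc.le (by simpa using hkn)
      have hIle := h S hSk I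
      rw [hbu] at hIle
      have hSN : S \ N = Nᶜ := by
        ext x
        simp only [Finset.mem_sdiff, Finset.mem_compl]
        exact ⟨fun ⟨_, hx⟩ => hx, fun hx => ⟨hSsub (Finset.mem_compl.mpr hx), hx⟩⟩
      have h1 : (S ∩ N).card + (S \ N).card = S.card := Finset.card_inter_add_card_sdiff S N
      have h2 : Nᶜ.card = n - N.card := by
        rw [Finset.card_compl, Fintype.card_fin]
      have h3 : N.card ≤ n := le_trans (Finset.card_le_univ N) (by simp)
      rw [Finset.inter_comm] at hIle
      have hIle' : I.card ≤ (S ∩ N).card := hIle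
      rw [hSN, hSk, h2] at h1
      omega
  · intro h S hSk I
    rcases I.eq_empty_or_nonempty with rfl | hI
    · simp
    · have hN := h I hI
      rw [hbu]
      set N := I.biUnion t with hNdef
      have h1 : (N ∪ S).card + (N ∩ S).card = N.card + S.card :=
        Finset.card_union_add_card_inter N S
      have h2 : (N ∪ S).card ≤ n := le_trans (Finset.card_le_univ _) (by simp)
      have h3 : 1 ≤ I.card := Finset.card_pos.mpr hI
      omega
end aux2

/-- For a k×n binary matrix M (n ≥ k), the product of the determinants of
all k×k submatrices of the matrix of indeterminates var(M) is not identically zero iff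
|∪_{i∈I} supp(M_i)| ≥ n − k + |I| for every nonempty set I of rows. -/
theorem stmt10 {k n : ℕ} (hkn : k ≤ n) {F : Type} [Field F] [Fintype F]
    (M : Matrix (Fin k) (Fin n) Bool) :
    (∏ S ∈ (Finset.univ.filter (fun S : Finset (Fin n) => S.card = k)).attach,
        Matrix.det
          (Matrix.submatrix
            (Matrix.of fun i j =>
              if M i j then (MvPolynomial.X (i, j) : MvPolynomial (Fin k × Fin n) F) else 0)
            id
            (fun i : Fin k =>
              ((S.1.orderIsoOfFin (Finset.mem_filter.mp S.2).2 i : {x // x ∈ S.1}) : Fin n)))) ≠ 0 ↔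
    (∀ I : Finset (Fin k), I.Nonempty →
        n - k + I.card ≤
          (I.biUnion (fun i => Finset.univ.filter (fun j => M i j = true))).card) := by
  rw [Finset.prod_ne_zero_iff]
  rw [← aux_comb hkn (fun i => Finset.univ.filter (fun j => M i j = true))]
  constructor
  · intro h S hSk I
    have hmem : S ∈ Finset.univ.filter (fun S : Finset (Fin n) => S.card = k) := by
      simp [hSk]
    have hd := h ⟨S, hmem⟩ (Finset.mem_attach _ _)
    rw [aux_det_ne_zero_iff M S (Finset.mem_filter.mp hmem).2, aux_perm_iff] at hd
    exact (Finset.all_card_le_biUnion_card_iff_exists_injective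
      (fun i => Finset.univ.filter (fun j => M i j = true) ∩ S)).mpr hd I
  · intro h S _
    rw [aux_det_ne_zero_iff M S.1 (Finset.mem_filter.mp S.2).2, aux_perm_iff]
    exact (Finset.all_card_le_biUnion_card_iff_exists_injective
      (fun i => Finset.univ.filter (fun j => M i j = true) ∩ S.1)).mp
      (h S.1 (Finset.mem_filter.mp S.2).2)
end

section
/- Let M be the adjacency matrix of an (n,k)-SMAN with n ≥ k ≥ 2, and suppose there exists a k×n matrix G over some finite field F_q such that: supp(G[j]) ⊆ supp(M[j]) for all j, every k columns of G are linearly independent (G generates an MDS code), and every k−1 columns of G generate a code of minimum distance at least 2. Then M satisfies the Weak Security Condition: |∪_{j∈J} supp(M[j])| ≥ |J| + 1 for every nonempty J ⊊ [n] with |J| < k. -/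
open Finset Matrix

lemma aux_mulVecLin_injective {k : ℕ} {m : Type} [Fintype m] {F : Type} [Field F]
    (A : Matrix (Fin k) m F) (hm : Fintype.card m = k) (h : A.rank = k) :
    Function.Injective A.mulVecLin := by
  rw [← LinearMap.ker_eq_bot]
  have h1 := LinearMap.finrank_range_add_finrank_ker A.mulVecLin
  rw [Module.finrank_fintype_fun_eq_card, hm] at h1
  have h2 : Module.finrank F (LinearMap.range A.mulVecLin) = k := h
  have h3 : Module.finrank F (LinearMap.ker A.mulVecLin) = 0 := by omega
  exact Submodule.finrank_eq_zero.mp h3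

/-- If a SMAN with adjacency matrix M admits an encoding matrix G
(respecting the zero pattern of M) that generates an MDS code and whose every k−1
columns generate a code of minimum distance ≥ 2, then M satisfies the Weak Security
Condition. -/
theorem stmt12 {k n : ℕ} {F : Type} [Field F] [Fintype F] [DecidableEq F]
    (hk : 2 ≤ k) (hkn : k ≤ n)
    (M : Matrix (Fin k) (Fin n) Bool) (G : Matrix (Fin k) (Fin n) F)
    (hsupp : ∀ i j, M i j = false → G i j = 0)
    (hMDS : ∀ S : Finset (Fin n), S.card = k →
        (G.submatrix id (fun j : {x // x ∈ S} => (j : Fin n))).rank = k)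
    (hdist : ∀ E : Finset (Fin n), E.card = k - 1 →
        ∀ α : Fin n → F, (fun i => ∑ j ∈ E, α j * G i j) ≠ 0 →
          2 ≤ (Finset.univ.filter (fun i : Fin k => (∑ j ∈ E, α j * G i j) ≠ 0)).card) :
    ∀ J : Finset (Fin n), J.Nonempty → J.card < k →
      J.card + 1 ≤ (J.biUnion (fun j => Finset.univ.filter (fun i => M i j = true))).card := by
  intro J hJne hJk
  by_contra hcon
  push_neg at hcon
  set S : Finset (Fin k) := J.biUnion (fun j => Finset.univ.filter (fun i => M i j = true))
    with hSdef
  have hScard : S.card ≤ J.card := Nat.lt_succ_iff.mp hcon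
  -- entries of G vanish outside S (rows) for columns in J
  have hzero : ∀ i : Fin k, i ∉ S → ∀ j ∈ J, G i j = 0 := by
    intro i hi j hj
    apply hsupp
    by_contra hM
    exact hi (Finset.mem_biUnion.mpr ⟨j, hj,
      Finset.mem_filter.mpr ⟨Finset.mem_univ i, by simpa using hM⟩⟩)
  -- independence of the columns indexed by J
  have hindep : ∀ α : Fin n → F, (∀ j, j ∉ J → α j = 0) →
      (∀ i, ∑ j ∈ J, α j * G i j = 0) → ∀ j, α j = 0 := by
    intro α hα0 hsum j
    obtain ⟨K, hJK, hKcard⟩ := Finset.exists_superset_card_eq (le_of_lt hJk)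
      (by simpa using hkn)
    set A : Matrix (Fin k) {x // x ∈ K} F :=
      G.submatrix id (fun j : {x // x ∈ K} => (j : Fin n)) with hAdef
    have hinj : Function.Injective A.mulVecLin :=
      aux_mulVecLin_injective A (by simp [hKcard]) (hMDS K hKcard)
    have hzeroK : A.mulVecLin (fun j : {x // x ∈ K} => α j) = 0 := by
      funext i
      have hs : ∑ j ∈ K, α j * G i j = 0 := by
        rw [← Finset.sum_subset hJK (fun x _ hx => by rw [hα0 x hx, zero_mul])]
        exact hsum i
      show A.mulVecLin (fun j : {x // x ∈ K} => α j) i = 0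
      calc A.mulVecLin (fun j : {x // x ∈ K} => α j) i
          = ∑ j : {x // x ∈ K}, G i (j : Fin n) * α j := by
            simp [A, Matrix.mulVecLin_apply, Matrix.mulVec, dotProduct]
        _ = ∑ j ∈ K, G i j * α j := Finset.sum_coe_sort K (fun j => G i j * α j)
        _ = ∑ j ∈ K, α j * G i j := Finset.sum_congr rfl (fun j _ => mul_comm _ _)
        _ = 0 := hs
    have : (fun j : {x // x ∈ K} => α j) = 0 := by
      apply hinj; simpa using hzeroK
    by_cases hj : j ∈ K
    · exact congrFun this ⟨j, hj⟩
    · exact hα0 j (fun h => hj (hJK h))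
  -- the restricted matrix B : S × J
  set B : Matrix {x // x ∈ S} {x // x ∈ J} F :=
    fun s j => G s j with hBdef
  -- injectivity of B.mulVecLin
  have hBinj : Function.Injective B.mulVecLin := by
    rw [← LinearMap.ker_eq_bot, LinearMap.ker_eq_bot']
    intro x hx
    set α : Fin n → F := fun j => if h : j ∈ J then x ⟨j, h⟩ else 0 with hαdef
    have hα0 : ∀ j, j ∉ J → α j = 0 := fun j hj => by simp [α, hj]
    have hsumJ : ∀ i : Fin k, ∑ j ∈ J, α j * G i j = ∑ j : {x // x ∈ J}, x j * G i j := by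
      intro i
      rw [← Finset.sum_coe_sort J (fun j => α j * G i j)]
      exact Finset.sum_congr rfl (fun j _ => by simp [α, j.2])
    have hall : ∀ i, ∑ j ∈ J, α j * G i j = 0 := by
      intro i
      by_cases hiS : i ∈ S
      · have h0 := congrFun hx ⟨i, hiS⟩
        have hs : ∑ j : {x // x ∈ J}, x j * G i (j : Fin n) = 0 := by
          calc ∑ j : {x // x ∈ J}, x j * G i (j : Fin n)
              = ∑ j : {x // x ∈ J}, B ⟨i, hiS⟩ j * x j :=
                Finset.sum_congr rfl (fun j _ => mul_comm _ _)
            _ = B.mulVecLin x ⟨i, hiS⟩ := by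
                simp [Matrix.mulVecLin_apply, Matrix.mulVec, dotProduct]
            _ = 0 := h0
        rw [hsumJ i, hs]
      · rw [← Finset.sum_coe_sort J (fun j => α j * G i j)]
        exact Finset.sum_eq_zero (fun j _ => by rw [hzero i hiS j j.2, mul_zero])
    funext j
    have := hindep α hα0 hall j
    simpa [α, j.2] using this
  -- therefore card S = card J and B.mulVecLin is surjective
  have hcards : Fintype.card {x // x ∈ J} ≤ Fintype.card {x // x ∈ S} := by
    have := LinearMap.finrank_le_finrank_of_injective hBinj
    simpa [Module.finrank_fintype_fun_eq_card] using this
  have hcardeq : Fintype.card {x // x ∈ J} = Fintype.card {x // x ∈ S} := by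
    simp only [Fintype.card_coe] at hcards ⊢
    omega
  have hBsurj : Function.Surjective B.mulVecLin := by
    refine (LinearMap.injective_iff_surjective_of_finrank_eq_finrank ?_).mp hBinj
    simp [Module.finrank_fintype_fun_eq_card, hcardeq]
  -- S is nonempty
  have hSne : S.Nonempty := by
    obtain ⟨j₀, hj₀⟩ := hJne
    by_contra hS
    rw [Finset.not_nonempty_iff_eq_empty] at hS
    set α : Fin n → F := fun j => if j = j₀ then 1 else 0 with hαdef
    have h10 : (1 : F) = 0 := by
      have := hindep α (fun j hj => by
          simp only [α, ite_eq_right_iff]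
          intro h; exact absurd (h ▸ hj₀) hj)
        (fun i => Finset.sum_eq_zero (fun j _ => by
          rw [hzero i (by simp [hS]) j (by assumption), mul_zero])) j₀
      simpa [α] using this
    exact one_ne_zero h10
  obtain ⟨s₀, hs₀⟩ := hSne
  -- get a weight-one codeword
  obtain ⟨x, hx⟩ := hBsurj (fun s => if s = ⟨s₀, hs₀⟩ then 1 else 0)
  set α : Fin n → F := fun j => if h : j ∈ J then x ⟨j, h⟩ else 0 with hαdef
  obtain ⟨E, hJE, hEcard⟩ := Finset.exists_superset_card_eq
    (Nat.le_sub_one_of_lt hJk) (by simp; omega)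
  set v : Fin k → F := fun i => ∑ j ∈ E, α j * G i j with hvdef
  have hvJ : ∀ i, v i = ∑ j : {x // x ∈ J}, x j * G i j := by
    intro i
    rw [hvdef]
    simp only
    rw [← Finset.sum_subset hJE (fun j _ hj => by simp [α, hj])]
    rw [← Finset.sum_coe_sort J (fun j => α j * G i j)]
    exact Finset.sum_congr rfl (fun j _ => by simp [α, j.2])
  have hvval : ∀ i, v i = if i = s₀ then 1 else 0 := by
    intro i
    by_cases hiS : i ∈ S
    · have h0 := congrFun hx ⟨i, hiS⟩
      have hs : ∑ j : {x // x ∈ J}, x j * G i (j : Fin n)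
          = if (⟨i, hiS⟩ : {x // x ∈ S}) = ⟨s₀, hs₀⟩ then 1 else 0 := by
        calc ∑ j : {x // x ∈ J}, x j * G i (j : Fin n)
            = ∑ j : {x // x ∈ J}, B ⟨i, hiS⟩ j * x j :=
              Finset.sum_congr rfl (fun j _ => mul_comm _ _)
          _ = B.mulVecLin x ⟨i, hiS⟩ := by
              simp [Matrix.mulVecLin_apply, Matrix.mulVec, dotProduct]
          _ = _ := h0
      rw [hvJ i, hs]
      by_cases hi : i = s₀ <;> simp [hi, Subtype.ext_iff]
    · have hi : i ≠ s₀ := fun h => hiS (h ▸ hs₀)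
      rw [hvJ i, if_neg hi]
      exact Finset.sum_eq_zero (fun j _ => by rw [hzero i hiS j j.2, mul_zero])
  have hvne : v ≠ 0 := by
    intro h
    have := congrFun h s₀
    rw [hvval s₀] at this
    simp at this
  have h2 := hdist E hEcard α (by simpa [v] using hvne)
  have hfilter : (Finset.univ.filter (fun i : Fin k => (∑ j ∈ E, α j * G i j) ≠ 0)) = {s₀} := by
    ext i
    simp only [Finset.mem_filter, Finset.mem_univ, true_and, Finset.mem_singleton]
    have : (∑ j ∈ E, α j * G i j) = v i := rfl
    rw [this, hvval i]
    by_cases hi : i = s₀ <;> simp [hi]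
  rw [hfilter] at h2
  simp at h2
end

section
/- Let R_1,…,R_k ⊆ [n] satisfy the Weak Security Condition |∪_{i∈I} R_i| ≥ n − k + |I| + 1 for all nonempty I ⊊ [k]. Suppose A, B ⊆ [k] are nonempty sets not containing a fixed index r, a,b ∈ R_r distinct, and both |(∪_{i∈A} R_i) ∪ (R_r∖{a})| ≤ n − k + |A| + 1 and |(∪_{i∈B} R_i) ∪ (R_r∖{b})| ≤ n − k + |B| + 1. Then |∪_{i∈A} R_i| = n − k + |A| + 1, |∪_{i∈B} R_i| = n − k + |B| + 1, R_r∖{a} ⊆ ∪_{i∈A} R_i, and R_r∖{b} ⊆ ∪_{i∈B} R_i. -/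
open Finset

/-- Consequences of the two deletion inequalities under the Weak Security
Condition. -/
theorem stmt13 {k n : ℕ} (hkn : k ≤ n) (R : Fin k → Finset (Fin n))
    (hWSC : ∀ I : Finset (Fin k), I.Nonempty → I ≠ Finset.univ →
        n - k + I.card + 1 ≤ (I.biUnion R).card)
    (r : Fin k) (A B : Finset (Fin k)) (hA : A.Nonempty) (hB : B.Nonempty)
    (hrA : r ∉ A) (hrB : r ∉ B)
    (a b : Fin n) (ha : a ∈ R r) (hb : b ∈ R r) (hab : a ≠ b)
    (hAa : ((A.biUnion R) ∪ (R r \ {a})).card ≤ n - k + A.card + 1)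
    (hBb : ((B.biUnion R) ∪ (R r \ {b})).card ≤ n - k + B.card + 1) :
    (A.biUnion R).card = n - k + A.card + 1 ∧
    (B.biUnion R).card = n - k + B.card + 1 ∧
    (R r \ {a}) ⊆ A.biUnion R ∧
    (R r \ {b}) ⊆ B.biUnion R := by
  have key : ∀ (S : Finset (Fin k)) (x : Fin n), S.Nonempty → r ∉ S →
      ((S.biUnion R) ∪ (R r \ {x})).card ≤ n - k + S.card + 1 →
      (S.biUnion R).card = n - k + S.card + 1 ∧ (R r \ {x}) ⊆ S.biUnion R := by
    intro S x hS hrS hle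
    have hne : S ≠ Finset.univ := fun h => hrS (h ▸ Finset.mem_univ r)
    have h1 := hWSC S hS hne
    have hsub : S.biUnion R ⊆ S.biUnion R ∪ (R r \ {x}) := Finset.subset_union_left
    have h2 : (S.biUnion R).card ≤ ((S.biUnion R) ∪ (R r \ {x})).card :=
      Finset.card_le_card hsub
    have hcard : (S.biUnion R).card = n - k + S.card + 1 := le_antisymm (h2.trans hle) h1
    have heq : (S.biUnion R) ∪ (R r \ {x}) = S.biUnion R :=
      (Finset.eq_of_subset_of_card_le hsub (hle.trans_eq hcard.symm)).symm
    exact ⟨hcard, heq ▸ Finset.subset_union_right⟩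
  obtain ⟨h1, h2⟩ := key A a hA hrA hAa
  obtain ⟨h3, h4⟩ := key B b hB hrB hBb
  exact ⟨h1, h3, h2, h4⟩
end

section
/- Let R_1,…,R_k ⊆ [n] satisfy |∪_{i∈I} R_i| ≥ n − k + |I| + 1 for all nonempty I ⊊ [k], and let A, B ⊆ [k] be nonempty with A ∩ B possibly empty, r ∉ A ∪ B, |R_r| ≥ n − k + 3, with R_r∖{a} ⊆ R_A and R_r∖{b} ⊆ R_B for distinct a,b ∈ R_r (where R_S := ∪_{i∈S} R_i). Then |R_A ∩ R_B| ≥ n − k + |A ∩ B| + 1. -/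
open Finset

/-- Lower bound on |R_A ∩ R_B| under the Weak Security Condition and the
inclusions R_r∖{a} ⊆ R_A, R_r∖{b} ⊆ R_B. -/
theorem stmt14 {k n : ℕ} (hkn : k ≤ n) (R : Fin k → Finset (Fin n))
    (hWSC : ∀ I : Finset (Fin k), I.Nonempty → I ≠ Finset.univ →
        n - k + I.card + 1 ≤ (I.biUnion R).card)
    (A B : Finset (Fin k)) (hA : A.Nonempty) (hB : B.Nonempty)
    (r : Fin k) (hr : r ∉ A ∪ B) (hRr : n - k + 3 ≤ (R r).card)
    (a b : Fin n) (ha : a ∈ R r) (hb : b ∈ R r) (hab : a ≠ b)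
    (hsubA : R r \ {a} ⊆ A.biUnion R) (hsubB : R r \ {b} ⊆ B.biUnion R) :
    n - k + (A ∩ B).card + 1 ≤ ((A.biUnion R) ∩ (B.biUnion R)).card := by
  rcases (A ∩ B).eq_empty_or_nonempty with hE | hne
  · -- A ∩ B = ∅ : use R_r \ {a,b}
    rw [hE]
    simp only [Finset.card_empty, add_zero]
    have hsub : R r \ {a, b} ⊆ (A.biUnion R) ∩ (B.biUnion R) := by
      intro x hx
      rw [Finset.mem_sdiff, Finset.mem_insert, Finset.mem_singleton] at hx
      push_neg at hx
      obtain ⟨hxr, hxa, hxb⟩ := hx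
      rw [Finset.mem_inter]
      exact ⟨hsubA (by simp [Finset.mem_sdiff, hxr, hxa]),
             hsubB (by simp [Finset.mem_sdiff, hxr, hxb])⟩
    have hcard : (R r \ {a, b}).card = (R r).card - 2 := by
      rw [Finset.card_sdiff_of_subset (by
        intro x hx
        rw [Finset.mem_insert, Finset.mem_singleton] at hx
        rcases hx with rfl | rfl <;> assumption)]
      rw [Finset.card_insert_of_notMem (by simpa using hab), Finset.card_singleton]
    calc n - k + 1 ≤ (R r).card - 2 := by omega
      _ = (R r \ {a, b}).card := hcard.symm
      _ ≤ _ := Finset.card_le_card hsub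
  · have hne' : A ∩ B ≠ Finset.univ := by
      intro h
      apply hr
      have : r ∈ A ∩ B := h ▸ Finset.mem_univ r
      rw [Finset.mem_inter] at this
      exact Finset.mem_union.2 (Or.inl this.1)
    refine le_trans (hWSC (A ∩ B) hne hne') (Finset.card_le_card ?_)
    intro x hx
    rw [Finset.mem_biUnion] at hx
    obtain ⟨i, hi, hxi⟩ := hx
    rw [Finset.mem_inter] at hi ⊢
    exact ⟨Finset.mem_biUnion.2 ⟨i, hi.1, hxi⟩, Finset.mem_biUnion.2 ⟨i, hi.2, hxi⟩⟩
end

section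
/- Let b ≥ 1 and ℓ ≥ 1 with ℓ < k, and suppose a k×n matrix G over F_q generates an MDS code such that for every subset E ⊆ [n] with |E| = ℓ, the ℓ-dimensional code of length k generated by (G[E])^T has minimum distance at least b+1. Then for every nonempty J ⊆ [n] with |J| ≤ ℓ, |∪_{j∈J} supp(G[j])| ≥ |J| + b. -/
open Finset Matrix

/-- If G generates an MDS code and every ℓ columns of G generate (after
transposing) a code of minimum distance ≥ b+1, then every nonempty set J of at most ℓ
columns satisfies |∪_{j∈J} supp(G[j])| ≥ |J| + b. -/
theorem stmt16 {k n ℓ b : ℕ} {F : Type} [Field F] [Fintype F] [DecidableEq F]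
    (hb : 1 ≤ b) (hℓ : 1 ≤ ℓ) (hℓk : ℓ < k) (hkn : k ≤ n)
    (G : Matrix (Fin k) (Fin n) F)
    (hMDS : ∀ S : Finset (Fin n), S.card = k →
        (G.submatrix id (fun j : {x // x ∈ S} => (j : Fin n))).rank = k)
    (hdist : ∀ E : Finset (Fin n), E.card = ℓ →
        ∀ α : Fin n → F, (fun i => ∑ j ∈ E, α j * G i j) ≠ 0 →
          b + 1 ≤ (Finset.univ.filter (fun i : Fin k => (∑ j ∈ E, α j * G i j) ≠ 0)).card) :
    ∀ J : Finset (Fin n), J.Nonempty → J.card ≤ ℓ →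
      J.card + b ≤ (J.biUnion (fun j => Finset.univ.filter (fun i => G i j ≠ 0))).card := by
  classical
  intro J hJne hJl
  by_contra hcon
  push_neg at hcon
  set U := J.biUnion (fun j => Finset.univ.filter (fun i => G i j ≠ 0)) with hUdef
  have hsupp : ∀ i : Fin k, i ∉ U → ∀ j ∈ J, G i j = 0 := by
    intro i hi j hj
    by_contra h
    exact hi (Finset.mem_biUnion.mpr ⟨j, hj, Finset.mem_filter.mpr ⟨Finset.mem_univ i, h⟩⟩)
  have hc1 : 1 ≤ J.card := Finset.card_pos.mpr hJne
  -- linear independence of the columns indexed by J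
  have hind : ∀ β : Fin n → F, (∀ j, j ∉ J → β j = 0) →
      (∀ i, ∑ j ∈ J, β j * G i j = 0) → ∀ j ∈ J, β j = 0 := by
    obtain ⟨S, hJS, hScard⟩ :=
      Finset.exists_superset_card_eq (le_trans hJl (le_of_lt hℓk)) (by simp [hkn])
    intro β hβ hsum
    set M := G.submatrix id (fun j : {x // x ∈ S} => (j : Fin n)) with hM
    have hrank : M.rank = k := hMDS S hScard
    have hker : LinearMap.ker M.mulVecLin = ⊥ := by
      have hrn := LinearMap.finrank_range_add_finrank_ker M.mulVecLin
      have hdom : Module.finrank F ({x // x ∈ S} → F) = k := by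
        simp [Module.finrank_fintype_fun_eq_card, hScard]
      rw [hdom] at hrn
      rw [Matrix.rank] at hrank
      have h0 : Module.finrank F (LinearMap.ker M.mulVecLin) = 0 := by omega
      exact Submodule.finrank_eq_zero.mp h0
    have hinj : Function.Injective M.mulVecLin := LinearMap.ker_eq_bot.mp hker
    have hx0 : M.mulVecLin (fun j : {x // x ∈ S} => β j) = 0 := by
      funext i
      simp only [Matrix.mulVecLin_apply, Matrix.mulVec, dotProduct, hM,
        Matrix.submatrix_apply, id, Pi.zero_apply]
      have h1 : ∑ j : {x // x ∈ S}, G i (j : Fin n) * β (j : Fin n)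
          = ∑ j ∈ S, G i j * β j := Finset.sum_coe_sort S (fun j => G i j * β j)
      rw [h1, ← Finset.sum_subset hJS (fun j _ hjJ => by simp [hβ j hjJ])]
      rw [← hsum i]
      exact Finset.sum_congr rfl (fun j _ => mul_comm _ _)
    have hz : (fun j : {x // x ∈ S} => β j) = 0 := hinj (by simpa using hx0)
    intro j hj
    exact congrFun hz ⟨j, hJS hj⟩
  -- find a nonzero kernel vector
  obtain ⟨T, hTU, hTcard⟩ := Finset.exists_subset_card_eq (min_le_right (J.card - 1) U.card)
  set A : Matrix {t // t ∈ T} {j // j ∈ J} F := fun t j => G t j with hA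
  have hnotinj : ¬ Function.Injective A.mulVecLin := by
    intro hinj
    have hle := LinearMap.finrank_le_finrank_of_injective hinj
    simp only [Module.finrank_fintype_fun_eq_card, Fintype.card_coe] at hle
    omega
  rw [Function.not_injective_iff] at hnotinj
  obtain ⟨x, y, hxy, hne⟩ := hnotinj
  set α : {j // j ∈ J} → F := x - y with hα
  have hα0 : α ≠ 0 := sub_ne_zero.mpr hne
  have hAα : A.mulVecLin α = 0 := by rw [hα, map_sub, hxy, sub_self]
  set α' : Fin n → F := fun j => if h : j ∈ J then α ⟨j, h⟩ else 0 with hα'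
  have hα'J : ∀ j : {j // j ∈ J}, α' (j : Fin n) = α j := by
    intro j
    simp only [hα', dif_pos j.2]
  have hvT : ∀ i ∈ T, (∑ j ∈ J, α' j * G i j) = 0 := by
    intro i hi
    have h1 := congrFun hAα ⟨i, hi⟩
    rw [Matrix.mulVecLin_apply] at h1
    simp only [Matrix.mulVecLin_apply, Matrix.mulVec, dotProduct, Pi.zero_apply, hA] at h1
    rw [← Finset.sum_attach J (fun j => α' j * G i j), ← h1, Finset.univ_eq_attach]
    exact Finset.sum_congr rfl (fun j _ => by rw [hα'J j, mul_comm])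
  have hvU : ∀ i, i ∉ U → (∑ j ∈ J, α' j * G i j) = 0 := by
    intro i hi
    exact Finset.sum_eq_zero (fun j hj => by rw [hsupp i hi j hj, mul_zero])
  have hcontra : ¬ (∀ i, ∑ j ∈ J, α' j * G i j = 0) := by
    intro h0
    apply hα0
    funext j
    have h1 := hind α' (fun j hj => dif_neg hj) h0 j j.2
    rw [← hα'J j, h1]
    rfl
  by_cases hcase : U.card < J.card - 1
  · -- then T = U and the combination vanishes everywhere: contradiction
    have hTeq : T = U := Finset.eq_of_subset_of_card_le hTU (by omega)
    exact hcontra (fun i => by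
      by_cases hi : i ∈ U
      · exact hvT i (hTeq ▸ hi)
      · exact hvU i hi)
  · -- extend J to a set E of size ℓ and apply hdist
    obtain ⟨E, hJE, hEcard⟩ := Finset.exists_superset_card_eq hJl (by simp; omega)
    have hsum_eq : ∀ i, ∑ j ∈ E, α' j * G i j = ∑ j ∈ J, α' j * G i j := by
      intro i
      refine (Finset.sum_subset hJE ?_).symm
      intro j _ hjJ
      simp [hα', dif_neg hjJ]
    have hne' : (fun i => ∑ j ∈ E, α' j * G i j) ≠ 0 := by
      intro h0
      exact hcontra (fun i => by rw [← hsum_eq i]; exact congrFun h0 i)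
    have hbd := hdist E hEcard α' hne'
    have hfil : Finset.univ.filter (fun i : Fin k => (∑ j ∈ E, α' j * G i j) ≠ 0) ⊆ U \ T := by
      intro i hi
      rw [Finset.mem_filter, hsum_eq i] at hi
      refine Finset.mem_sdiff.mpr ⟨?_, ?_⟩
      · by_contra hiU; exact hi.2 (hvU i hiU)
      · intro hiT; exact hi.2 (hvT i hiT)
    have hcard := Finset.card_le_card hfil
    rw [Finset.card_sdiff_of_subset hTU] at hcard
    omega
end

section
/- Suppose f ∈ F_q[x_1,…,x_m] is a nonzero polynomial and the degree of f in each variable is less than q' for some field extension F_{q'} of F_q with q' sufficiently large (q' greater than the total degree of f). Then there exists an assignment (g_1,…,g_m) ∈ F_{q'}^m with f(g_1,…,g_m) ≠ 0. Consequently, if M is a k×n binary matrix satisfying both |∪_{i∈I} supp(M_i)| ≥ n−k+|I| for all nonempty I ⊆ [k] and the Weak Security Condition, then for sufficiently large q there is a matrix G over F_q with supp(G[j]) ⊆ supp(M[j]) such that every k×k submatrix of G is invertible and every (k−1)×(k−1) submatrix within any k−1 columns of G is invertible. -/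
open Finset Matrix

section Helpers

open MvPolynomial

lemma my_sz {K : Type*} [Field K] [Fintype K] :
    ∀ {m : ℕ} (f : MvPolynomial (Fin m) K), f ≠ 0 → f.totalDegree < Fintype.card K →
      ∃ g : Fin m → K, MvPolynomial.eval g f ≠ 0 := by
  intro m
  induction m with
  | zero =>
    intro f hf _
    obtain ⟨a, rfl⟩ := MvPolynomial.C_surjective (Fin 0) f
    exact ⟨0, by simpa using fun h => hf (by rw [h, map_zero])⟩
  | succ N IH =>
    intro f hf hdeg
    set q := MvPolynomial.finSuccEquiv K N f with hq
    have hq0 : q ≠ 0 := fun h => hf ((MvPolynomial.finSuccEquiv K N).map_eq_zero_iff.mp h)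
    have hlead : q.coeff q.natDegree ≠ 0 := Polynomial.leadingCoeff_ne_zero.mpr hq0
    have hld : (q.coeff q.natDegree).totalDegree + q.natDegree ≤ f.totalDegree :=
      MvPolynomial.totalDegree_coeff_finSuccEquiv_add_le f q.natDegree hlead
    obtain ⟨r, hr⟩ := IH (q.coeff q.natDegree) hlead
      (lt_of_le_of_lt (le_trans (Nat.le_add_right _ _) hld) hdeg)
    set φ := q.map (MvPolynomial.eval r) with hφ
    have hφ0 : φ ≠ 0 := fun h => hr (by
      have := Polynomial.coeff_map (MvPolynomial.eval r) q.natDegree (p := q)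
      rw [← hφ, h, Polynomial.coeff_zero] at this
      exact this.symm)
    have hφdeg : φ.natDegree < Fintype.card K := by
      have h1 : φ.natDegree ≤ q.natDegree := Polynomial.natDegree_map_le
      omega
    obtain ⟨r₀, hr₀⟩ := φ.exists_eval_ne_zero_of_natDegree_lt_card hφ0 (by
      simpa using hφdeg)
    exact ⟨Fin.cons r₀ r, by rwa [MvPolynomial.eval_eq_eval_mv_eval']⟩

lemma my_sz' {K : Type*} [Field K] [Fintype K] {σ : Type*} [Fintype σ]
    (f : MvPolynomial σ K) (hf : f ≠ 0) (hdeg : f.totalDegree < Fintype.card K) :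
    ∃ g : σ → K, MvPolynomial.eval g f ≠ 0 := by
  classical
  set e := Fintype.equivFin σ with he
  set Q := MvPolynomial.rename e f with hQ
  have hQ0 : Q ≠ 0 := fun h => hf (by
    have := MvPolynomial.rename_injective (R := K) e e.injective
    exact this (by rw [← hQ, h, map_zero]))
  have hQdeg : Q.totalDegree < Fintype.card K :=
    lt_of_le_of_lt (MvPolynomial.totalDegree_rename_le _ _) hdeg
  obtain ⟨g', hg'⟩ := my_sz Q hQ0 hQdeg
  refine ⟨g' ∘ e, ?_⟩
  rwa [← MvPolynomial.eval_rename, ← hQ]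

lemma my_totalDegree_map_le {R S σ : Type*} [CommSemiring R] [CommSemiring S]
    (φ : R →+* S) (f : MvPolynomial σ R) :
    (MvPolynomial.map φ f).totalDegree ≤ f.totalDegree := by
  rw [MvPolynomial.totalDegree, MvPolynomial.totalDegree]
  exact Finset.sup_mono (MvPolynomial.support_map_subset _ _)

lemma det_generic_ne_zero {K : Type*} [Field K] {r : ℕ} {ι : Type*} [DecidableEq ι]
    (v : Fin r → Fin r → ι) (hv : ∀ i j i' j', v i j = v i' j' → i = i' ∧ j = j')
    (P : Fin r → Fin r → Prop) [∀ i j, Decidable (P i j)]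
    (σ : Equiv.Perm (Fin r)) (hσ : ∀ j, P (σ j) j) :
    (Matrix.of fun i j =>
      if P i j then (MvPolynomial.X (v i j) : MvPolynomial ι K) else 0).det ≠ 0 := by
  set A : Matrix (Fin r) (Fin r) (MvPolynomial ι K) :=
    Matrix.of fun i j => if P i j then (MvPolynomial.X (v i j) : MvPolynomial ι K) else 0 with hA
  set s : Finset ι := Finset.univ.image (fun j => v (σ j) j) with hs
  set ψ : MvPolynomial ι K →+* MvPolynomial ι K :=
    (MvPolynomial.aeval
      (fun a => if a ∈ s then (MvPolynomial.X a : MvPolynomial ι K) else 0)).toRingHom with hψ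
  have hψX : ∀ a,
      ψ (MvPolynomial.X a) = if a ∈ s then (MvPolynomial.X a : MvPolynomial ι K) else 0 := by
    intro a
    simp only [hψ, AlgHom.toRingHom_eq_coe, RingHom.coe_coe, MvPolynomial.aeval_X]
  have hmem : ∀ i j, v i j ∈ s ↔ i = σ j := by
    intro i j
    constructor
    · intro h
      rw [hs, Finset.mem_image] at h
      obtain ⟨j₀, -, hj₀⟩ := h
      obtain ⟨h1, h2⟩ := hv _ _ _ _ hj₀.symm
      subst h2; exact h1
    · rintro rfl
      exact Finset.mem_image.mpr ⟨j, Finset.mem_univ _, rfl⟩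
  have hmap : A.map ψ =
      (Matrix.diagonal (fun j => (MvPolynomial.X (v (σ j) j) : MvPolynomial ι K))).submatrix
        σ.symm id := by
    refine Matrix.ext fun i j => ?_
    rw [Matrix.map_apply, Matrix.submatrix_apply, id_eq]
    by_cases hij : i = σ j
    · subst hij
      rw [Equiv.symm_apply_apply, Matrix.diagonal_apply_eq]
      show ψ (if P (σ j) j then (MvPolynomial.X (v (σ j) j) : MvPolynomial ι K) else 0) = _
      rw [if_pos (hσ j), hψX, if_pos ((hmem _ _).mpr rfl)]
    · rw [Matrix.diagonal_apply_ne _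
        (fun h => hij (by rw [← h, Equiv.apply_symm_apply]))]
      show ψ (if P i j then (MvPolynomial.X (v i j) : MvPolynomial ι K) else 0) = 0
      by_cases hP : P i j
      · rw [if_pos hP, hψX, if_neg (fun h => hij ((hmem i j).mp h))]
      · rw [if_neg hP, map_zero]
  intro h
  have hdet := RingHom.map_det ψ A
  rw [h, map_zero, RingHom.mapMatrix_apply, hmap, Matrix.det_permute,
    Matrix.det_diagonal] at hdet
  have hprod : (∏ j, (MvPolynomial.X (v (σ j) j) : MvPolynomial ι K)) ≠ 0 :=
    Finset.prod_ne_zero_iff.mpr (fun j _ => MvPolynomial.X_ne_zero _)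
  have hsign : ((Equiv.Perm.sign σ.symm : ℤ) : MvPolynomial ι K) ≠ 0 := by
    rcases Int.units_eq_one_or (Equiv.Perm.sign σ.symm) with h1 | h1 <;> simp [h1]
  exact (mul_ne_zero hsign hprod) hdet.symm

lemma totalDegree_det_le {K : Type*} [Field K] {r : ℕ} {ι : Type*}
    (A : Matrix (Fin r) (Fin r) (MvPolynomial ι K))
    (hA : ∀ i j, (A i j).totalDegree ≤ 1) :
    A.det.totalDegree ≤ r := by
  rw [Matrix.det_apply]
  refine (MvPolynomial.totalDegree_finset_sum _ _).trans (Finset.sup_le fun σ _ => ?_)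
  refine (MvPolynomial.totalDegree_smul_le _ _).trans ?_
  refine (MvPolynomial.totalDegree_finset_prod _ _).trans ?_
  calc (∑ i, (A (σ i) i).totalDegree) ≤ ∑ _i : Fin r, 1 :=
        Finset.sum_le_sum fun i _ => hA _ _
    _ = r := by simp

lemma count_aux {α : Type*} [Fintype α] [DecidableEq α] (U Sf : Finset α) (c : ℕ)
    (h : Fintype.card α - Sf.card + c ≤ U.card) : c ≤ (U ∩ Sf).card := by
  have h1 : U ⊆ (U ∩ Sf) ∪ Sfᶜ := by
    intro x hx
    by_cases hxS : x ∈ Sf <;> simp [hx, hxS]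
  have h2 : U.card ≤ (U ∩ Sf).card + (Fintype.card α - Sf.card) := by
    calc U.card ≤ ((U ∩ Sf) ∪ Sfᶜ).card := Finset.card_le_card h1
      _ ≤ (U ∩ Sf).card + Sfᶜ.card := Finset.card_union_le _ _
      _ = (U ∩ Sf).card + (Fintype.card α - Sf.card) := by rw [Finset.card_compl]
  omega

lemma exists_perm_matching {r : ℕ} {β : Type*} [Fintype β] [DecidableEq β]
    (R : Fin r → β → Prop) [∀ i b, Decidable (R i b)] (e : Fin r → β)
    (hcond : ∀ s : Finset (Fin r), s.Nonempty →
      s.card ≤ ((s.biUnion fun i => Finset.univ.filter (R i)) ∩ (Finset.univ.image e)).card) :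
    ∃ σ : Equiv.Perm (Fin r), ∀ i, R i (e (σ i)) := by
  classical
  set t : Fin r → Finset (Fin r) := fun i => Finset.univ.filter (fun l => R i (e l)) with ht
  have hall : ∀ s : Finset (Fin r), s.card ≤ (s.biUnion t).card := by
    intro s
    rcases s.eq_empty_or_nonempty with rfl | hs
    · simp
    refine (hcond s hs).trans ?_
    refine Finset.card_le_card_of_surjOn (s := s.biUnion t) e ?_
    intro x hx
    simp only [Finset.coe_inter, Set.mem_inter_iff, Finset.mem_coe] at hx
    obtain ⟨hxU, hxI⟩ := hx
    obtain ⟨l, -, rfl⟩ := Finset.mem_image.mp hxI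
    obtain ⟨i, his, hiR⟩ := Finset.mem_biUnion.mp hxU
    refine ⟨l, ?_, rfl⟩
    rw [Finset.mem_coe, Finset.mem_biUnion]
    exact ⟨i, his, Finset.mem_filter.mpr ⟨Finset.mem_univ _, (Finset.mem_filter.mp hiR).2⟩⟩
  obtain ⟨f, hfinj, hft⟩ := (Finset.all_card_le_biUnion_card_iff_exists_injective t).mp hall
  refine ⟨Equiv.ofBijective f (Finite.injective_iff_bijective.mp hfinj), fun i => ?_⟩
  simpa [ht] using (Finset.mem_filter.mp (hft i)).2

end Helpers

section Aux

def colIdx {a : ℕ} {α : Type*} [LinearOrder α] (S : Finset α) (hS : S.card = a) :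
    Fin a → α := fun l => ((S.orderIsoOfFin hS l : {x // x ∈ S}) : α)

lemma colIdx_inj {a : ℕ} {α : Type*} [LinearOrder α] (S : Finset α) (hS : S.card = a) :
    Function.Injective (colIdx S hS) := fun x y h =>
  (S.orderIsoOfFin hS).injective (Subtype.ext h)

lemma colIdx_mem {a : ℕ} {α : Type*} [LinearOrder α] (S : Finset α) (hS : S.card = a)
    (l : Fin a) : colIdx S hS l ∈ S := (S.orderIsoOfFin hS l).2

lemma image_colIdx {a : ℕ} {α : Type*} [LinearOrder α] [Fintype α] [DecidableEq α]
    (S : Finset α) (hS : S.card = a) : Finset.univ.image (colIdx S hS) = S := by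
  apply Finset.eq_of_subset_of_card_le
  · intro x hx
    obtain ⟨l, -, rfl⟩ := Finset.mem_image.mp hx
    exact colIdx_mem S hS l
  · rw [Finset.card_image_of_injective _ (colIdx_inj S hS), Finset.card_univ,
      Fintype.card_fin, hS]

lemma matching_row {k n : ℕ} (M : Matrix (Fin k) (Fin n) Bool)
    (hrow : ∀ I : Finset (Fin k), I.Nonempty →
        n - k + I.card ≤
          (I.biUnion (fun i => Finset.univ.filter (fun j => M i j = true))).card)
    (S : Finset (Fin n)) (hS : S.card = k) :
    ∃ σ : Equiv.Perm (Fin k), ∀ j, M (σ j) (colIdx S hS j) = true := by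
  have hcond : ∀ s : Finset (Fin k), s.Nonempty →
      s.card ≤ ((s.biUnion fun i => Finset.univ.filter ((fun i b => M i b = true) i)) ∩
        (Finset.univ.image (colIdx S hS))).card := by
    intro s hs
    rw [image_colIdx]
    refine count_aux _ _ _ ?_
    rw [Fintype.card_fin, hS]
    exact hrow s hs
  obtain ⟨τ, hτ⟩ := @exists_perm_matching _ _ _ _ (fun i b => M i b = true)
    (fun i b => instDecidableEqBool (M i b) true) (colIdx S hS) hcond
  refine ⟨τ.symm, fun j => ?_⟩
  have := hτ (τ.symm j)
  rwa [Equiv.apply_symm_apply] at this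

lemma matching_col {k n : ℕ} (M : Matrix (Fin k) (Fin n) Bool)
    (hWS : ∀ J : Finset (Fin n), J.Nonempty → J.card < k →
        J.card + 1 ≤ (J.biUnion (fun j => Finset.univ.filter (fun i => M i j = true))).card)
    (E : Finset (Fin n)) (hE : E.card = k - 1)
    (T : Finset (Fin k)) (hT : T.card = k - 1) :
    ∃ σ : Equiv.Perm (Fin (k - 1)), ∀ l, M (colIdx T hT (σ l)) (colIdx E hE l) = true := by
  have hcond : ∀ s : Finset (Fin (k - 1)), s.Nonempty →
      s.card ≤ ((s.biUnion fun l =>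
          Finset.univ.filter ((fun l i => M i (colIdx E hE l) = true) l)) ∩
        (Finset.univ.image (colIdx T hT))).card := by
    intro s hs
    have hk1 : 1 ≤ k := by
      obtain ⟨l0, -⟩ := hs
      have := l0.2
      omega
    rw [image_colIdx]
    have him : (s.biUnion fun l => Finset.univ.filter (fun i => M i (colIdx E hE l) = true))
        = (s.image (colIdx E hE)).biUnion
            (fun j => Finset.univ.filter (fun i => M i j = true)) := by
      ext x
      simp only [Finset.mem_biUnion, Finset.mem_filter, Finset.mem_univ, true_and,
        Finset.mem_image]
      constructor
      · rintro ⟨l, hl, hM⟩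
        exact ⟨colIdx E hE l, ⟨l, hl, rfl⟩, hM⟩
      · rintro ⟨j, ⟨l, hl, rfl⟩, hM⟩
        exact ⟨l, hl, hM⟩
    rw [him]
    refine count_aux _ _ _ ?_
    rw [Fintype.card_fin, hT]
    have hJc : (s.image (colIdx E hE)).card = s.card :=
      Finset.card_image_of_injective _ (colIdx_inj E hE)
    have hJne : (s.image (colIdx E hE)).Nonempty := hs.image _
    have hJlt : (s.image (colIdx E hE)).card < k := by
      rw [hJc]
      have h2 := Finset.card_le_univ s
      rw [Fintype.card_fin] at h2
      omega
    have := hWS _ hJne hJlt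
    omega
  exact exists_perm_matching (fun l i => M i (colIdx E hE l) = true) (colIdx T hT) hcond

noncomputable def genMat {k n : ℕ} (M : Matrix (Fin k) (Fin n) Bool) (K : Type*) [CommSemiring K] :
    Matrix (Fin k) (Fin n) (MvPolynomial (Fin k × Fin n) K) :=
  Matrix.of fun i j => if M i j = true then MvPolynomial.X (i, j) else 0

lemma genMat_deg {k n : ℕ} (M : Matrix (Fin k) (Fin n) Bool) (K : Type*) [CommSemiring K] [Nontrivial K]
    (i : Fin k) (j : Fin n) : ((genMat M K) i j).totalDegree ≤ 1 := by
  simp only [genMat, Matrix.of_apply]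
  split
  · rw [MvPolynomial.totalDegree_X]
  · simp

lemma minor1_det_ne_zero {k n : ℕ} (M : Matrix (Fin k) (Fin n) Bool) (K : Type*) [Field K]
    (hrow : ∀ I : Finset (Fin k), I.Nonempty →
        n - k + I.card ≤
          (I.biUnion (fun i => Finset.univ.filter (fun j => M i j = true))).card)
    (S : Finset (Fin n)) (hS : S.card = k) :
    ((genMat M K).submatrix id (colIdx S hS)).det ≠ 0 := by
  obtain ⟨σ, hσ⟩ := matching_row M hrow S hS
  have hv : ∀ i j i' j' : Fin k, ((i, colIdx S hS j) : Fin k × Fin n) = (i', colIdx S hS j') →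
      i = i' ∧ j = j' := by
    intro i j i' j' h
    rw [Prod.mk.injEq] at h
    exact ⟨h.1, colIdx_inj S hS h.2⟩
  exact det_generic_ne_zero (fun i j => (i, colIdx S hS j)) hv
    (fun i j => M i (colIdx S hS j) = true) σ hσ

lemma minor2_det_ne_zero {k n : ℕ} (M : Matrix (Fin k) (Fin n) Bool) (K : Type*) [Field K]
    (hWS : ∀ J : Finset (Fin n), J.Nonempty → J.card < k →
        J.card + 1 ≤ (J.biUnion (fun j => Finset.univ.filter (fun i => M i j = true))).card)
    (E : Finset (Fin n)) (hE : E.card = k - 1)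
    (T : Finset (Fin k)) (hT : T.card = k - 1) :
    ((genMat M K).submatrix (colIdx T hT) (colIdx E hE)).det ≠ 0 := by
  obtain ⟨σ, hσ⟩ := matching_col M hWS E hE T hT
  have hv : ∀ i j i' j' : Fin (k - 1),
      ((colIdx T hT i, colIdx E hE j) : Fin k × Fin n) = (colIdx T hT i', colIdx E hE j') →
      i = i' ∧ j = j' := by
    intro i j i' j' h
    rw [Prod.mk.injEq] at h
    exact ⟨colIdx_inj T hT h.1, colIdx_inj E hE h.2⟩
  exact det_generic_ne_zero (fun i j => (colIdx T hT i, colIdx E hE j)) hv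
    (fun i j => M (colIdx T hT i) (colIdx E hE j) = true) σ hσ

end Aux

/-- (i) A nonzero multivariate polynomial over F_q has a nonvanishing
assignment over any field extension F_{q'} whose cardinality exceeds its total degree.
(ii) Consequently, if a k×n binary matrix M satisfies the rank condition
|∪_{i∈I} supp(M_i)| ≥ n−k+|I| for all nonempty I and the Weak Security Condition, then
for all sufficiently large finite fields there is a matrix G fitting the zero pattern of
M whose every k×k submatrix is invertible and whose every (k−1)×(k−1) submatrix within
any k−1 columns is invertible. -/
theorem stmt17 {k n m : ℕ} (hkn : k ≤ n) {F : Type} [Field F] [Fintype F]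
    (f : MvPolynomial (Fin m) F) (hf : f ≠ 0)
    (M : Matrix (Fin k) (Fin n) Bool)
    (hrow : ∀ I : Finset (Fin k), I.Nonempty →
        n - k + I.card ≤
          (I.biUnion (fun i => Finset.univ.filter (fun j => M i j = true))).card)
    (hWS : ∀ J : Finset (Fin n), J.Nonempty → J.card < k →
        J.card + 1 ≤ (J.biUnion (fun j => Finset.univ.filter (fun i => M i j = true))).card) :
    -- (i) Schwartz–Zippel-type nonvanishing over a large enough extension field:
    (∀ (F' : Type) [Field F'] [Fintype F'], ∀ φ : F →+* F',
        f.totalDegree < Fintype.card F' →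
          ∃ g : Fin m → F', MvPolynomial.eval g (MvPolynomial.map φ f) ≠ 0) ∧
    -- (ii) existence of the desired encoding matrix over all large enough finite fields:
    (∃ N : ℕ, ∀ (F' : Type) [Field F'] [Fintype F'] [DecidableEq F'],
        N ≤ Fintype.card F' →
          ∃ G : Matrix (Fin k) (Fin n) F',
            (∀ i j, M i j = false → G i j = 0) ∧
            (∀ S : Finset (Fin n), ∀ hS : S.card = k,
              Matrix.det
                (G.submatrix id
                  (fun i : Fin k => ((S.orderIsoOfFin hS i : {x // x ∈ S}) : Fin n))) ≠ 0) ∧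
            (∀ E : Finset (Fin n), ∀ hE : E.card = k - 1,
              ∀ T : Finset (Fin k), ∀ hT : T.card = k - 1,
                Matrix.det
                  (G.submatrix
                    (fun i : Fin (k - 1) => ((T.orderIsoOfFin hT i : {x // x ∈ T}) : Fin k))
                    (fun j : Fin (k - 1) => ((E.orderIsoOfFin hE j : {x // x ∈ E}) : Fin n))) ≠ 0)) := by
  classical
  constructor
  · intro F' _ _ φ hdeg
    have hmap : MvPolynomial.map φ f ≠ 0 := fun h =>
      hf (MvPolynomial.map_injective φ φ.injective (by rw [h, map_zero]))
    exact my_sz _ hmap (lt_of_le_of_lt (my_totalDegree_map_le φ f) hdeg)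
  · refine ⟨(Finset.powersetCard k (Finset.univ : Finset (Fin n))).card * k +
      ((Finset.powersetCard (k - 1) (Finset.univ : Finset (Fin n))) ×ˢ
        (Finset.powersetCard (k - 1) (Finset.univ : Finset (Fin k)))).card * (k - 1) + 1, ?_⟩
    intro F' _ _ _ hcard
    set pr1 : MvPolynomial (Fin k × Fin n) F' :=
      ∏ S ∈ (Finset.powersetCard k (Finset.univ : Finset (Fin n))).attach,
        ((genMat M F').submatrix id
          (colIdx S.1 (Finset.mem_powersetCard.mp S.2).2)).det with hpr1
    set pr2 : MvPolynomial (Fin k × Fin n) F' :=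
      ∏ p ∈ ((Finset.powersetCard (k - 1) (Finset.univ : Finset (Fin n))) ×ˢ
          (Finset.powersetCard (k - 1) (Finset.univ : Finset (Fin k)))).attach,
        ((genMat M F').submatrix
          (colIdx p.1.2 (Finset.mem_powersetCard.mp (Finset.mem_product.mp p.2).2).2)
          (colIdx p.1.1 (Finset.mem_powersetCard.mp (Finset.mem_product.mp p.2).1).2)).det
      with hpr2
    have h1 : pr1 ≠ 0 :=
      Finset.prod_ne_zero_iff.mpr fun S _ => minor1_det_ne_zero M F' hrow _ _
    have h2 : pr2 ≠ 0 :=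
      Finset.prod_ne_zero_iff.mpr fun p _ => minor2_det_ne_zero M F' hWS _ _ _ _
    have hP0 : pr1 * pr2 ≠ 0 := mul_ne_zero h1 h2
    have d1 : pr1.totalDegree ≤
        (Finset.powersetCard k (Finset.univ : Finset (Fin n))).card * k := by
      rw [hpr1]
      refine (MvPolynomial.totalDegree_finset_prod _ _).trans ?_
      calc ∑ S ∈ (Finset.powersetCard k (Finset.univ : Finset (Fin n))).attach,
            ((genMat M F').submatrix id (colIdx S.1 (Finset.mem_powersetCard.mp S.2).2)).det.totalDegree
          ≤ ∑ _S ∈ (Finset.powersetCard k (Finset.univ : Finset (Fin n))).attach, k :=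
            Finset.sum_le_sum fun S _ => totalDegree_det_le _
              (fun i j => by rw [Matrix.submatrix_apply]; exact genMat_deg M F' _ _)
        _ = _ := by rw [Finset.sum_const, Finset.card_attach, smul_eq_mul]
    have d2 : pr2.totalDegree ≤
        ((Finset.powersetCard (k - 1) (Finset.univ : Finset (Fin n))) ×ˢ
          (Finset.powersetCard (k - 1) (Finset.univ : Finset (Fin k)))).card * (k - 1) := by
      rw [hpr2]
      refine (MvPolynomial.totalDegree_finset_prod _ _).trans ?_
      calc ∑ p ∈ ((Finset.powersetCard (k - 1) (Finset.univ : Finset (Fin n))) ×ˢ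
              (Finset.powersetCard (k - 1) (Finset.univ : Finset (Fin k)))).attach,
            ((genMat M F').submatrix
              (colIdx p.1.2 (Finset.mem_powersetCard.mp (Finset.mem_product.mp p.2).2).2)
              (colIdx p.1.1 (Finset.mem_powersetCard.mp (Finset.mem_product.mp p.2).1).2)).det.totalDegree
          ≤ ∑ _p ∈ ((Finset.powersetCard (k - 1) (Finset.univ : Finset (Fin n))) ×ˢ
              (Finset.powersetCard (k - 1) (Finset.univ : Finset (Fin k)))).attach, (k - 1) :=
            Finset.sum_le_sum fun p _ => totalDegree_det_le _
              (fun i j => by rw [Matrix.submatrix_apply]; exact genMat_deg M F' _ _)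
        _ = _ := by rw [Finset.sum_const, Finset.card_attach, smul_eq_mul]
    have hdegP : (pr1 * pr2).totalDegree < Fintype.card F' := by
      have hm := MvPolynomial.totalDegree_mul pr1 pr2
      omega
    obtain ⟨g, hg⟩ := my_sz' (pr1 * pr2) hP0 hdegP
    refine ⟨Matrix.of (fun i j => if M i j = true then g (i, j) else 0), ?_, ?_, ?_⟩
    · intro i j hMij
      simp [hMij]
    · intro S hS
      have hmem : S ∈ Finset.powersetCard k (Finset.univ : Finset (Fin n)) :=
        Finset.mem_powersetCard.mpr ⟨Finset.subset_univ _, hS⟩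
      have key : (Matrix.of (fun i j => if M i j = true then g (i, j) else 0)).submatrix id
          (fun i : Fin k => ((S.orderIsoOfFin hS i : {x // x ∈ S}) : Fin n))
          = ((genMat M F').submatrix id (colIdx S hS)).map (MvPolynomial.eval g) := by
        refine Matrix.ext fun i j => ?_
        simp only [Matrix.submatrix_apply, Matrix.map_apply, Matrix.of_apply, genMat,
          colIdx, id_eq]
        split <;> simp
      rw [key, ← RingHom.mapMatrix_apply, ← RingHom.map_det]
      intro h0
      apply hg
      rw [_root_.map_mul]
      apply mul_eq_zero_of_left
      rw [hpr1, map_prod]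
      exact Finset.prod_eq_zero (Finset.mem_attach _ ⟨S, hmem⟩) h0
    · intro E hE T hT
      have hmem : (E, T) ∈ (Finset.powersetCard (k - 1) (Finset.univ : Finset (Fin n))) ×ˢ
          (Finset.powersetCard (k - 1) (Finset.univ : Finset (Fin k))) :=
        Finset.mem_product.mpr ⟨Finset.mem_powersetCard.mpr ⟨Finset.subset_univ _, hE⟩,
          Finset.mem_powersetCard.mpr ⟨Finset.subset_univ _, hT⟩⟩
      have key : (Matrix.of (fun i j => if M i j = true then g (i, j) else 0)).submatrix
          (fun i : Fin (k - 1) => ((T.orderIsoOfFin hT i : {x // x ∈ T}) : Fin k))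
          (fun j : Fin (k - 1) => ((E.orderIsoOfFin hE j : {x // x ∈ E}) : Fin n))
          = ((genMat M F').submatrix (colIdx T hT) (colIdx E hE)).map (MvPolynomial.eval g) := by
        refine Matrix.ext fun i j => ?_
        simp only [Matrix.submatrix_apply, Matrix.map_apply, Matrix.of_apply, genMat, colIdx]
        split <;> simp
      rw [key, ← RingHom.mapMatrix_apply, ← RingHom.map_det]
      intro h0
      apply hg
      rw [_root_.map_mul]
      apply mul_eq_zero_of_right
      rw [hpr2, map_prod]
      exact Finset.prod_eq_zero (Finset.mem_attach _ ⟨(E, T), hmem⟩) h0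
end

section
/- Let R_1,…,R_k be subsets of [n] with n ≥ k. If there exists a nonempty J ⊊ [n] with |J| ≤ k−1 such that |{i ∈ [k] : J ∩ R_i ≠ ∅}| ≤ |J|, then there exists a nonempty proper I ⊊ [k] with |∪_{i∈I} R_i| ≤ n − k + |I|. -/
open Finset

/-- If some nonempty proper set J of at most k−1 columns touches at most
|J| of the sets R_i, then the row form of the Weak Security Condition fails. -/
theorem stmt18 {k n : ℕ} (hkn : k ≤ n) (R : Fin k → Finset (Fin n))
    (J : Finset (Fin n)) (hJne : J.Nonempty) (hJprop : J ≠ Finset.univ)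
    (hJcard : J.card ≤ k - 1)
    (h : (Finset.univ.filter (fun i : Fin k => (J ∩ R i).Nonempty)).card ≤ J.card) :
    ∃ I : Finset (Fin k), I.Nonempty ∧ I ≠ Finset.univ ∧
      (I.biUnion R).card ≤ n - k + I.card := by
  set T := Finset.univ.filter (fun i : Fin k => (J ∩ R i).Nonempty) with hT
  have hJ1 : 1 ≤ J.card := Finset.card_pos.mpr hJne
  have hk2 : 2 ≤ k := by omega
  have hsub : ∀ I : Finset (Fin k), (∀ i ∈ I, i ∉ T) → I.biUnion R ⊆ Jᶜ := by
    intro I hI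
    intro x hx
    simp only [Finset.mem_biUnion] at hx
    obtain ⟨i, hi, hxi⟩ := hx
    simp only [Finset.mem_compl]
    intro hxJ
    exact hI i hi (by simp [hT, Finset.mem_filter]; exact ⟨x, Finset.mem_inter.mpr ⟨hxJ, hxi⟩⟩)
  have hcompl : ∀ I : Finset (Fin n), I ⊆ Jᶜ → I.card ≤ n - J.card := by
    intro I hI
    calc I.card ≤ Jᶜ.card := Finset.card_le_card hI
    _ = n - J.card := by rw [Finset.card_compl, Fintype.card_fin]
  by_cases hTe : T.Nonempty
  · refine ⟨Tᶜ, ?_, ?_, ?_⟩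
    · rw [← Finset.card_pos, Finset.card_compl, Fintype.card_fin]
      have := Finset.card_le_card (Finset.subset_univ T)
      simp only [Finset.card_univ, Fintype.card_fin] at this
      omega
    · intro hc
      obtain ⟨i, hi⟩ := hTe
      have : i ∈ Tᶜ := hc ▸ Finset.mem_univ i
      exact (Finset.mem_compl.mp this) hi
    · have h1 : (Tᶜ.biUnion R).card ≤ n - J.card :=
        hcompl _ (hsub _ (fun i hi => Finset.mem_compl.mp hi))
      have h2 : Tᶜ.card = k - T.card := by
        rw [Finset.card_compl, Fintype.card_fin]
      have hTc := Finset.card_pos.mpr hTe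
      omega
  · obtain ⟨i0⟩ : Nonempty (Fin k) := ⟨⟨0, by omega⟩⟩
    refine ⟨Finset.univ.erase i0, ?_, ?_, ?_⟩
    · rw [← Finset.card_pos, Finset.card_erase_of_mem (Finset.mem_univ i0),
        Finset.card_univ, Fintype.card_fin]
      omega
    · intro hc
      have : i0 ∈ Finset.univ.erase i0 := by rw [hc]; exact Finset.mem_univ i0
      exact (Finset.mem_erase.mp this).1 rfl
    · have hTempty : T = ∅ := Finset.not_nonempty_iff_eq_empty.mp hTe
      have h1 : ((Finset.univ.erase i0).biUnion R).card ≤ n - J.card :=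
        hcompl _ (hsub _ (fun i _ hiT => by simp [hTempty] at hiT))
      rw [Finset.card_erase_of_mem (Finset.mem_univ i0), Finset.card_univ, Fintype.card_fin]
      omega
end
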